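/- Let p be a prime and let j, k be distinct primes with 2 < j < p − 2 and 2 < k < p − 2. Then the bivariate polynomial P_k(x) − P_j(y) ∈ F_p[x,y] is absolutely irreducible over F_p, where P_j(x) = ∏_{i=1}^{j} (x+i) and P_k(x) = ∏_{i=1}^{k} (x+i). -/

import Mathlib

open MvPolynomial

/-- `P_j(x) = ∏_{i=1}^{j} (x + i)` over `ZMod p`. -/
noncomputable def Pfact (p j : ℕ) : Polynomial (ZMod p) :=
  ∏ i ∈ Finset.Icc 1 j, (Polynomial.X + Polynomial.C (i : ZMod p))

namespace PfactAux

/-! ### The equivalence `MvPolynomial (Fin 2) L ≃ L[x][T]` and irreducibility of `x^k - y^j`. -/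

noncomputable def E2 (L : Type*) [CommSemiring L] :
    MvPolynomial (Fin 2) L ≃ₐ[L] Polynomial (Polynomial L) :=
  (finSuccEquiv L 1).trans <| Polynomial.mapAlgEquiv <|
    (finSuccEquiv L 0).trans <| Polynomial.mapAlgEquiv <| isEmptyAlgEquiv L (Fin 0)

theorem E2_X0 (L : Type*) [CommSemiring L] : E2 L (X 0) = Polynomial.X := by
  simp [E2, finSuccEquiv_X_zero, Polynomial.mapAlgEquiv]

theorem E2_X1 (L : Type*) [CommSemiring L] : E2 L (X 1) = Polynomial.C Polynomial.X := by
  have h1 : (1 : Fin 2) = Fin.succ 0 := rfl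
  rw [E2]
  simp only [AlgEquiv.trans_apply, h1, finSuccEquiv_X_succ, Polynomial.coe_mapAlgEquiv,
    Polynomial.map_C, AlgEquiv.coe_trans, Function.comp_apply, finSuccEquiv_X_zero,
    Polynomial.map_X]
  congr 1
  simp [finSuccEquiv_X_zero]

theorem XpowsubC_irred {L : Type*} [Field L] {j k : ℕ} (hj : j.Prime) (hk : k.Prime)
    (hjk : j ≠ k) :
    Irreducible ((Polynomial.X : Polynomial (Polynomial L)) ^ k
      - Polynomial.C (Polynomial.X ^ j)) := by
  have hmonic : ((Polynomial.X : Polynomial (Polynomial L)) ^ k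
      - Polynomial.C (Polynomial.X ^ j)).Monic :=
    Polynomial.monic_X_pow_sub_C _ hk.ne_zero
  set K := FractionRing (Polynomial L)
  rw [hmonic.irreducible_iff_irreducible_map_fraction_map (K := K)]
  rw [Polynomial.map_sub, Polynomial.map_pow, Polynomial.map_X, Polynomial.map_C]
  refine X_pow_sub_C_irreducible_of_prime hk ?_
  intro b hb
  have hbint : IsIntegral (Polynomial L) b := by
    refine ⟨Polynomial.X ^ k - Polynomial.C (Polynomial.X ^ j), hmonic, ?_⟩
    simp [Polynomial.eval₂_sub, hb]
  obtain ⟨q, hq⟩ := IsIntegrallyClosed.isIntegral_iff.mp hbint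
  rw [← hq, ← map_pow] at hb
  have hqk : q ^ k = Polynomial.X ^ j := IsFractionRing.injective (Polynomial L) K hb
  have hdeg : k * q.natDegree = j := by
    have := congrArg Polynomial.natDegree hqk
    simpa [Polynomial.natDegree_pow] using this
  exact hjk ((Nat.prime_dvd_prime_iff_eq hk hj).mp ⟨q.natDegree, hdeg.symm⟩).symm

theorem G_irred {L : Type*} [Field L] {j k : ℕ} (hj : j.Prime) (hk : k.Prime) (hjk : j ≠ k) :
    Irreducible ((X 0) ^ k - (X 1) ^ j : MvPolynomial (Fin 2) L) := by
  rw [← MulEquiv.irreducible_iff (E2 L).toMulEquiv]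
  have : (E2 L).toMulEquiv ((X 0) ^ k - (X 1) ^ j : MvPolynomial (Fin 2) L)
      = (Polynomial.X : Polynomial (Polynomial L)) ^ k - Polynomial.C (Polynomial.X ^ j) := by
    show E2 L _ = _
    rw [map_sub, map_pow, map_pow, E2_X0, E2_X1, ← Polynomial.C_pow]
  rw [this]
  exact XpowsubC_irred hj hk hjk

/-! ### The grading homomorphism `x ↦ C x · T^j`, `y ↦ C y · T^k`. -/

variable {L : Type*} [Field L]

noncomputable def phiW (L : Type*) [CommSemiring L] (j k : ℕ) :
    MvPolynomial (Fin 2) L →ₐ[L] Polynomial (MvPolynomial (Fin 2) L) :=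
  aeval ![Polynomial.C (X 0) * Polynomial.X ^ j, Polynomial.C (X 1) * Polynomial.X ^ k]

theorem phiW_monomial (j k : ℕ) (m : Fin 2 →₀ ℕ) (c : L) :
    phiW L j k (monomial m c)
      = Polynomial.C (monomial m c) * Polynomial.X ^ (m 0 * j + m 1 * k) := by
  rw [phiW, aeval_monomial, Finsupp.prod_fintype _ _ (fun i => pow_zero _), Fin.prod_univ_two]
  have hm : (monomial m c : MvPolynomial (Fin 2) L) = C c * X 0 ^ m 0 * X 1 ^ m 1 := by
    rw [monomial_eq, Finsupp.prod_fintype _ _ (fun i => pow_zero _), Fin.prod_univ_two]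
    ring
  simp only [Matrix.cons_val_zero, Matrix.cons_val_one, Matrix.head_cons, hm,
    algebraMap_eq, Polynomial.algebraMap_apply, RingHom.id_apply]
  rw [mul_pow, mul_pow, ← Polynomial.C_pow, ← Polynomial.C_pow, ← pow_mul, ← pow_mul]
  rw [map_mul, map_mul]
  ring

theorem phiW_coeff (j k : ℕ) (A : MvPolynomial (Fin 2) L) (n : ℕ) :
    (phiW L j k A).coeff n
      = ∑ m ∈ A.support, if m 0 * j + m 1 * k = n then monomial m (A.coeff m) else 0 := by
  conv_lhs => rw [A.as_sum, map_sum, Polynomial.finset_sum_coeff]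
  refine Finset.sum_congr rfl fun m _ => ?_
  rw [phiW_monomial, Polynomial.coeff_C_mul, Polynomial.coeff_X_pow]
  split_ifs with h1 h2 h2 <;> simp_all

theorem coeff_phiW_eq_zero {j k : ℕ} (A : MvPolynomial (Fin 2) L) {n : ℕ}
    (h : A.support.sup (fun m => m 0 * j + m 1 * k) < n) : (phiW L j k A).coeff n = 0 := by
  rw [phiW_coeff]
  refine Finset.sum_eq_zero fun m hm => ?_
  rw [if_neg]
  exact fun he =>
    absurd (he ▸ Finset.le_sup (f := fun m => m 0 * j + m 1 * k) hm : n ≤ _) (not_le.mpr h)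

theorem natDegree_phiW {j k : ℕ} (A : MvPolynomial (Fin 2) L) (hA : A ≠ 0) :
    (phiW L j k A).natDegree = A.support.sup (fun m => m 0 * j + m 1 * k) := by
  set d := A.support.sup (fun m => m 0 * j + m 1 * k) with hd
  obtain ⟨m₀, hm₀, hwt⟩ := Finset.exists_mem_eq_sup A.support
    (support_nonempty.mpr hA) (fun m => m 0 * j + m 1 * k)
  have hcoeff : (phiW L j k A).coeff d ≠ 0 := by
    rw [phiW_coeff]
    intro h0
    have := congrArg (MvPolynomial.coeff m₀) h0
    rw [coeff_sum, Finset.sum_eq_single m₀] at this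
    · rw [if_pos hwt.symm, coeff_monomial, if_pos rfl] at this
      exact (mem_support_iff.mp hm₀) (by simpa using this)
    · intro m hm hne
      split_ifs with h
      · rw [coeff_monomial, if_neg hne]
      · rfl
    · intro h; exact absurd hm₀ h
  refine le_antisymm ?_ (Polynomial.le_natDegree_of_ne_zero hcoeff)
  exact Polynomial.natDegree_le_iff_coeff_eq_zero.mpr fun n hn => coeff_phiW_eq_zero A hn

theorem isUnit_of_isUnit_leadingCoeff_phiW {j k : ℕ} (hj : 0 < j) (hk : 0 < k)
    (A : MvPolynomial (Fin 2) L) (hA : A ≠ 0)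
    (h : IsUnit ((phiW L j k A).leadingCoeff)) : IsUnit A := by
  by_cases hconst : ∀ m ∈ A.support, m = 0
  · have heq : A = C (A.coeff 0) := by
      rcases Finset.eq_empty_or_nonempty A.support with he | ⟨m, hm⟩
      · exact absurd (support_eq_empty.mp he) hA
      · have hsub : A.support = {0} := Finset.eq_singleton_iff_unique_mem.mpr
          ⟨hconst m hm ▸ hm, hconst⟩
        conv_lhs => rw [A.as_sum, hsub, Finset.sum_singleton]
        rw [monomial_zero']
    have hc : A.coeff 0 ≠ 0 := fun h0 => hA (by rw [heq, h0, map_zero])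
    rw [heq]
    exact (isUnit_iff_ne_zero.mpr hc).map C
  · push_neg at hconst
    obtain ⟨m₁, hm₁, hm₁ne⟩ := hconst
    exfalso
    set d := A.support.sup (fun m => m 0 * j + m 1 * k) with hd
    have hdpos : 0 < d := by
      refine lt_of_lt_of_le ?_ (Finset.le_sup (f := fun m => m 0 * j + m 1 * k) hm₁)
      rcases Finsupp.ne_iff.mp hm₁ne with ⟨i, hi⟩
      fin_cases i <;> simp only [Finsupp.coe_zero, Pi.zero_apply] at hi <;> positivity
    have hlc : (phiW L j k A).leadingCoeff
        = ∑ m ∈ A.support, if m 0 * j + m 1 * k = d then monomial m (A.coeff m) else 0 := by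
      rw [Polynomial.leadingCoeff, natDegree_phiW A hA, phiW_coeff]
    have hcc : constantCoeff ((phiW L j k A).leadingCoeff) = 0 := by
      rw [hlc, map_sum]
      refine Finset.sum_eq_zero fun m hm => ?_
      split_ifs with hwt
      · rw [constantCoeff_monomial, if_neg]
        rintro rfl
        simp at hwt; omega
      · exact map_zero _
    have := h.map (constantCoeff (R := L) (σ := Fin 2))
    rw [hcc] at this
    exact not_isUnit_zero this

/-! ### Degree and leading coefficient computations for the image of the products. -/

theorem linfact_natDegree {R : Type*} [CommRing R] [Nontrivial R] {a : R} (ha : a ≠ 0) {n : ℕ}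
    (hn : 0 < n) (b : R) :
    (Polynomial.C a * Polynomial.X ^ n + Polynomial.C b).natDegree = n := by
  have hcoeff : (Polynomial.C a * Polynomial.X ^ n + Polynomial.C b).coeff n = a := by
    rw [Polynomial.coeff_add, Polynomial.coeff_C_mul, Polynomial.coeff_X_pow, if_pos rfl,
      Polynomial.coeff_C, if_neg hn.ne', mul_one, add_zero]
  refine le_antisymm ?_ (Polynomial.le_natDegree_of_ne_zero (by rw [hcoeff]; exact ha))
  refine le_trans (Polynomial.natDegree_add_le _ _) ?_
  simp only [Polynomial.natDegree_C, max_le_iff, Nat.zero_le, and_true]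
  exact le_trans (Polynomial.natDegree_C_mul_le _ _) (by simp)

theorem linfact_leadingCoeff {R : Type*} [CommRing R] [Nontrivial R] {a : R} (ha : a ≠ 0) {n : ℕ}
    (hn : 0 < n) (b : R) :
    (Polynomial.C a * Polynomial.X ^ n + Polynomial.C b).leadingCoeff = a := by
  rw [Polynomial.leadingCoeff, linfact_natDegree ha hn b, Polynomial.coeff_add,
    Polynomial.coeff_C_mul, Polynomial.coeff_X_pow, if_pos rfl, Polynomial.coeff_C,
    if_neg hn.ne', mul_one, add_zero]

theorem phiW_linfact {j k : ℕ} (c : L) :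
    phiW L j k (X 0 + C c)
      = Polynomial.C (X 0) * Polynomial.X ^ j + Polynomial.C (C c) := by
  rw [map_add, phiW, aeval_X, aeval_C]
  simp [Polynomial.algebraMap_apply, algebraMap_eq]

theorem phiW_linfact' {j k : ℕ} (c : L) :
    phiW L j k (X 1 + C c)
      = Polynomial.C (X 1) * Polynomial.X ^ k + Polynomial.C (C c) := by
  rw [map_add, phiW, aeval_X, aeval_C]
  simp [Polynomial.algebraMap_apply, algebraMap_eq]

/-! ### The main irreducibility lemma. -/

theorem main_irred {j k : ℕ} (hj : j.Prime) (hk : k.Prime) (hjk : j ≠ k) (c d : ℕ → L) :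
    Irreducible ((∏ i ∈ Finset.Icc 1 k, (X 0 + C (c i)))
      - ∏ i ∈ Finset.Icc 1 j, (X 1 + C (d i)) : MvPolynomial (Fin 2) L) := by
  have hjpos : 0 < j := hj.pos
  have hkpos : 0 < k := hk.pos
  set F : MvPolynomial (Fin 2) L :=
    (∏ i ∈ Finset.Icc 1 k, (X 0 + C (c i))) - ∏ i ∈ Finset.Icc 1 j, (X 1 + C (d i)) with hF
  set φ := phiW L j k with hφ
  set G : MvPolynomial (Fin 2) L := (X 0) ^ k - (X 1) ^ j with hG
  have hX01 : (X 0 : MvPolynomial (Fin 2) L) ≠ 0 := X_ne_zero 0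
  have hX11 : (X 1 : MvPolynomial (Fin 2) L) ≠ 0 := X_ne_zero 1
  -- the image of the first product
  have hP : φ (∏ i ∈ Finset.Icc 1 k, (X 0 + C (c i)))
      = ∏ i ∈ Finset.Icc 1 k, (Polynomial.C (X 0) * Polynomial.X ^ j + Polynomial.C (C (c i))) := by
    rw [map_prod]
    exact Finset.prod_congr rfl fun i _ => phiW_linfact (c i)
  have hQ : φ (∏ i ∈ Finset.Icc 1 j, (X 1 + C (d i)))
      = ∏ i ∈ Finset.Icc 1 j, (Polynomial.C (X 1) * Polynomial.X ^ k + Polynomial.C (C (d i))) := by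
    rw [map_prod]
    exact Finset.prod_congr rfl fun i _ => phiW_linfact' (d i)
  have hfne : ∀ i : ℕ,
      (Polynomial.C (X 0 : MvPolynomial (Fin 2) L) * Polynomial.X ^ j
        + Polynomial.C (C (c i))) ≠ 0 := fun i h0 => by
    have := linfact_leadingCoeff hX01 hjpos (C (c i) : MvPolynomial (Fin 2) L)
    rw [h0, Polynomial.leadingCoeff_zero] at this
    exact hX01 this.symm
  have hgne : ∀ i : ℕ,
      (Polynomial.C (X 1 : MvPolynomial (Fin 2) L) * Polynomial.X ^ k
        + Polynomial.C (C (d i))) ≠ 0 := fun i h0 => by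
    have := linfact_leadingCoeff hX11 hkpos (C (d i) : MvPolynomial (Fin 2) L)
    rw [h0, Polynomial.leadingCoeff_zero] at this
    exact hX11 this.symm
  have hcard_k : (Finset.Icc 1 k).card = k := by rw [Nat.card_Icc]; omega
  have hcard_j : (Finset.Icc 1 j).card = j := by rw [Nat.card_Icc]; omega
  have hPdeg : (φ (∏ i ∈ Finset.Icc 1 k, (X 0 + C (c i)))).natDegree = j * k := by
    rw [hP, Polynomial.natDegree_prod _ _ (fun i _ => hfne i)]
    rw [Finset.sum_congr rfl fun i _ => linfact_natDegree hX01 hjpos _]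
    rw [Finset.sum_const, hcard_k, smul_eq_mul, mul_comm]
  have hQdeg : (φ (∏ i ∈ Finset.Icc 1 j, (X 1 + C (d i)))).natDegree = j * k := by
    rw [hQ, Polynomial.natDegree_prod _ _ (fun i _ => hgne i)]
    rw [Finset.sum_congr rfl fun i _ => linfact_natDegree hX11 hkpos _]
    rw [Finset.sum_const, hcard_j, smul_eq_mul]
  have hPlc : (φ (∏ i ∈ Finset.Icc 1 k, (X 0 + C (c i)))).leadingCoeff = (X 0) ^ k := by
    rw [hP, Polynomial.leadingCoeff_prod]
    rw [Finset.prod_congr rfl fun i _ => linfact_leadingCoeff hX01 hjpos _]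
    rw [Finset.prod_const, hcard_k]
  have hQlc : (φ (∏ i ∈ Finset.Icc 1 j, (X 1 + C (d i)))).leadingCoeff = (X 1) ^ j := by
    rw [hQ, Polynomial.leadingCoeff_prod]
    rw [Finset.prod_congr rfl fun i _ => linfact_leadingCoeff hX11 hkpos _]
    rw [Finset.prod_const, hcard_j]
  -- leading coefficient of φ F
  have hGne : G ≠ 0 := by
    rw [hG, sub_ne_zero]
    intro he
    have := congrArg (MvPolynomial.coeff (Finsupp.single 0 k)) he
    rw [MvPolynomial.coeff_X_pow, MvPolynomial.coeff_X_pow, if_pos rfl, if_neg] at this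
    · exact one_ne_zero this
    · intro hs
      have := DFunLike.congr_fun hs 0
      simp [Finsupp.single_apply] at this
      omega
  have hcoeffF : (φ F).coeff (j * k) = G := by
    rw [hF, map_sub, Polynomial.coeff_sub, ← hPdeg, ← Polynomial.leadingCoeff, hPlc,
      hPdeg, ← hQdeg, ← Polynomial.leadingCoeff, hQlc, hG]
  have hFdeg : (φ F).natDegree = j * k := by
    refine le_antisymm ?_ (Polynomial.le_natDegree_of_ne_zero (hcoeffF ▸ hGne))
    rw [hF, map_sub]
    exact le_trans (Polynomial.natDegree_sub_le _ _) (by rw [hPdeg, hQdeg]; omega)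
  have hFlc : (φ F).leadingCoeff = G := by rw [Polynomial.leadingCoeff, hFdeg, hcoeffF]
  have hFne : F ≠ 0 := by
    intro h0
    rw [h0, map_zero, Polynomial.leadingCoeff_zero] at hFlc
    exact hGne hFlc.symm
  constructor
  · intro hu
    have := Polynomial.natDegree_eq_zero_of_isUnit (hu.map φ)
    rw [hFdeg] at this
    rw [Nat.mul_eq_zero] at this
    omega
  · intro A B hAB
    have hAne : A ≠ 0 := fun h0 => hFne (by rw [hAB, h0, zero_mul])
    have hBne : B ≠ 0 := fun h0 => hFne (by rw [hAB, h0, mul_zero])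
    have hmul : G = (φ A).leadingCoeff * (φ B).leadingCoeff := by
      rw [← Polynomial.leadingCoeff_mul, ← map_mul, ← hAB, hFlc]
    rcases (G_irred hj hk hjk).isUnit_or_isUnit hmul with h | h
    · exact Or.inl (isUnit_of_isUnit_leadingCoeff_phiW hjpos hkpos A hAne h)
    · exact Or.inr (isUnit_of_isUnit_leadingCoeff_phiW hjpos hkpos B hBne h)

end PfactAux

open PfactAux in
/-- **Lemma 7 (off-diagonal case).** For distinct primes `2 < j, k < p − 2`, the polynomial
`P_k(x) − P_j(y)` is absolutely irreducible over `F_p`. -/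
theorem Pfact_difference_absolutely_irreducible (p : ℕ) [Fact p.Prime]
    (j k : ℕ) (hj : j.Prime) (hk : k.Prime) (hjk : j ≠ k)
    (h2j : 2 < j) (hjp : j + 2 < p) (h2k : 2 < k) (hkp : k + 2 < p) :
    Irreducible (MvPolynomial.map (algebraMap (ZMod p) (AlgebraicClosure (ZMod p)))
      (Polynomial.aeval (X 0 : MvPolynomial (Fin 2) (ZMod p)) (Pfact p k) -
        Polynomial.aeval (X 1 : MvPolynomial (Fin 2) (ZMod p)) (Pfact p j))) := by
  set L := AlgebraicClosure (ZMod p)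
  set σ := algebraMap (ZMod p) L
  have hmapped : MvPolynomial.map σ
      (Polynomial.aeval (X 0 : MvPolynomial (Fin 2) (ZMod p)) (Pfact p k) -
        Polynomial.aeval (X 1 : MvPolynomial (Fin 2) (ZMod p)) (Pfact p j))
      = (∏ i ∈ Finset.Icc 1 k, (X 0 + C ((i : ℕ) : L)))
        - ∏ i ∈ Finset.Icc 1 j, (X 1 + C ((i : ℕ) : L)) := by
    rw [map_sub, Pfact, Pfact, map_prod, map_prod, map_prod, map_prod]
    congr 1 <;> refine Finset.prod_congr rfl fun i _ => ?_ <;>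
      simp [map_add, Polynomial.aeval_X, Polynomial.aeval_C, algebraMap_eq, map_natCast]
    all_goals exact (map_natCast (C : L →+* MvPolynomial (Fin 2) L) i).symm
  rw [hmapped]
  exact main_irred hj hk hjk (fun i => ((i : ℕ) : L)) (fun i => ((i : ℕ) : L))
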